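/- Let S ∈ ℝ^{n×n}, q ∈ ℝ^n, a > 0, ν > 0, and suppose Q ∈ ℝ^{n×n} is symmetric positive definite and solves the algebraic Riccati equation SᵀQ + QS - 2ν Q q qᵀ Q + aI = 0. Set kᵀ = qᵀQ. Then for every λ ∈ ℂ with Re λ ≥ ν, the matrix F = S - λ q kᵀ ∈ ℂ^{n×n} is Hurwitz, i.e. all eigenvalues of F have negative real part. -/

import Mathlib

open Matrix Complex

/-- Riccati-based simultaneous stabilization: if `Q > 0` is symmetric and solves
`SᵀQ + QS - 2ν Q q qᵀ Q + aI = 0` with `a, ν > 0` and `kᵀ = qᵀQ`, then for every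
`λ ∈ ℂ` with `Re λ ≥ ν` the matrix `F = S - λ q kᵀ` is Hurwitz. -/
theorem riccati_simultaneous_stabilization (n : ℕ)
    (S : Matrix (Fin n) (Fin n) ℝ) (q : Fin n → ℝ) (a ν : ℝ)
    (ha : 0 < a) (hν : 0 < ν)
    (Q : Matrix (Fin n) (Fin n) ℝ) (hQsymm : Q.IsSymm) (hQpos : Q.PosDef)
    (hRiccati : Sᵀ * Q + Q * S - (2 * ν) • (Q * Matrix.vecMulVec q q * Q)
        + a • (1 : Matrix (Fin n) (Fin n) ℝ) = 0)
    (k : Fin n → ℝ) (hk : k = Matrix.vecMul q Q)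
    (lam : ℂ) (hlam : ν ≤ lam.re)
    (F : Matrix (Fin n) (Fin n) ℂ)
    (hF : F = S.map (algebraMap ℝ ℂ)
        - lam • (Matrix.vecMulVec q k).map (algebraMap ℝ ℂ)) :
    ∀ μ ∈ spectrum ℂ F, μ.re < 0 := by
  intro μ hμ
  -- extract an eigenvector
  rw [← AlgEquiv.spectrum_eq (Matrix.toLinAlgEquiv' : Matrix (Fin n) (Fin n) ℂ ≃ₐ[ℂ] _) F,
    ← Module.End.hasEigenvalue_iff_mem_spectrum] at hμ
  obtain ⟨ξ, hmem, hξ0⟩ := hμ.exists_hasEigenvector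
  have hξ : F *ᵥ ξ = μ • ξ := by
    have := Module.End.HasEigenvector.apply_eq_smul ⟨hmem, hξ0⟩
    simpa [Matrix.toLinAlgEquiv'_apply] using this
  set c : ℝ →+* ℂ := algebraMap ℝ ℂ with hc
  -- real matrix identities
  have hQq : Q *ᵥ q = k := by rw [hk, ← Matrix.mulVec_transpose, hQsymm]
  have hQqq : Q * vecMulVec q q = vecMulVec k q := by
    ext i j
    simp only [Matrix.mul_apply, vecMulVec_apply, ← hQq, Matrix.mulVec, dotProduct]
    rw [Finset.sum_mul]
    exact Finset.sum_congr rfl fun l _ => by ring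
  have hQqk : Q * vecMulVec q k = vecMulVec k k := by
    ext i j
    simp only [Matrix.mul_apply, vecMulVec_apply, ← hQq, Matrix.mulVec, dotProduct]
    rw [Finset.sum_mul]
    exact Finset.sum_congr rfl fun l _ => by ring
  have hkqQ : vecMulVec k q * Q = vecMulVec k k := by
    ext i j
    simp only [Matrix.mul_apply, vecMulVec_apply, hk, Matrix.vecMul, dotProduct]
    rw [Finset.mul_sum]
    exact Finset.sum_congr rfl fun l _ => by ring
  have hRic : Sᵀ * Q + Q * S = (2*ν) • vecMulVec k k - a • (1 : Matrix (Fin n) (Fin n) ℝ) := by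
    rw [hQqq, hkqQ, sub_add, sub_eq_zero] at hRiccati
    exact hRiccati
  set QC := Q.map c with hQC
  set KC := (vecMulVec k k).map c with hKC
  -- conjugate transpose of F
  have hFH : Fᴴ = Sᵀ.map c - (starRingEnd ℂ lam) • (vecMulVec k q).map c := by
    rw [hF, conjTranspose_sub, conjTranspose_smul]
    congr 1
    · ext i j
      simp [conjTranspose_apply, Matrix.map_apply, hc, Complex.conj_ofReal]
    · congr 1
      ext i j
      simp [conjTranspose_apply, Matrix.map_apply, vecMulVec_apply, hc, Complex.conj_ofReal,
        mul_comm]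
  have hconj : starRingEnd ℂ lam + lam = ((2 * lam.re : ℝ) : ℂ) := by
    rw [add_comm, Complex.add_conj]
  -- the Lyapunov matrix identity
  have hG : Fᴴ * QC + QC * F
      = ((2*ν - 2*lam.re : ℝ) : ℂ) • KC - (a : ℂ) • (1 : Matrix (Fin n) (Fin n) ℂ) := by
    rw [hFH, hF, sub_mul, mul_sub, smul_mul_assoc, mul_smul_comm, hQC, ← Matrix.map_mul,
      ← Matrix.map_mul, ← Matrix.map_mul, ← Matrix.map_mul, hkqQ, hQqk, ← hKC]
    have hmaps : (Sᵀ * Q).map c + (Q * S).map c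
        = ((2*ν : ℝ) : ℂ) • KC - (a : ℂ) • (1 : Matrix (Fin n) (Fin n) ℂ) := by
      rw [← Matrix.map_add _ (by simp) (Sᵀ * Q) (Q * S), hRic,
        Matrix.map_sub _ (by simp)]
      congr 1
      · rw [hKC, Matrix.map_smul c (2*ν) (fun x => by simp [hc, Algebra.smul_def])]
        ext i j
        simp [Matrix.smul_apply, Algebra.smul_def]
      · rw [Matrix.map_smul c a (fun x => by simp [hc, Algebra.smul_def])]
        ext i j
        simp [Matrix.smul_apply, Matrix.map_apply, Matrix.one_apply, apply_ite c, hc,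
          Algebra.smul_def]
    rw [sub_add_sub_comm, hmaps, ← add_smul, hconj]
    push_cast
    module
  -- quadratic form values
  set E : ℂ := star ξ ⬝ᵥ (QC *ᵥ ξ) with hE
  have hA : star ξ ⬝ᵥ ((Fᴴ * QC + QC * F) *ᵥ ξ) = (starRingEnd ℂ μ + μ) * E := by
    rw [Matrix.add_mulVec, dotProduct_add, ← Matrix.mulVec_mulVec, ← Matrix.mulVec_mulVec,
      Matrix.dotProduct_mulVec (star ξ) Fᴴ, ← Matrix.star_mulVec, hξ, star_smul,
      smul_dotProduct, Matrix.mulVec_smul, dotProduct_smul, hE]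
    simp only [smul_eq_mul, RCLike.star_def]
    ring
  set w : ℂ := (fun i => (k i : ℂ)) ⬝ᵥ ξ with hw
  set T : ℝ := ∑ i, Complex.normSq (ξ i) with hT
  have hKval : star ξ ⬝ᵥ (KC *ᵥ ξ) = (Complex.normSq w : ℂ) := by
    have h1 : KC *ᵥ ξ = fun i => (k i : ℂ) * w := by
      funext i
      simp only [hKC, Matrix.mulVec, dotProduct, Matrix.map_apply, vecMulVec_apply, hw, hc,
        Complex.coe_algebraMap, Complex.ofReal_mul]
      rw [Finset.mul_sum]
      exact Finset.sum_congr rfl fun l _ => by ring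
    rw [h1]
    have h2 : starRingEnd ℂ w = ∑ i, (k i : ℂ) * starRingEnd ℂ (ξ i) := by
      rw [hw]
      simp [dotProduct, map_sum, Complex.conj_ofReal]
    calc star ξ ⬝ᵥ (fun i => (k i : ℂ) * w)
        = ∑ i, starRingEnd ℂ (ξ i) * ((k i : ℂ) * w) := rfl
      _ = (∑ i, (k i : ℂ) * starRingEnd ℂ (ξ i)) * w := by
          rw [Finset.sum_mul]
          exact Finset.sum_congr rfl fun i _ => by ring
      _ = starRingEnd ℂ w * w := by rw [h2]
      _ = (Complex.normSq w : ℂ) := by rw [mul_comm, Complex.mul_conj]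
  have hIval : star ξ ⬝ᵥ ((1 : Matrix (Fin n) (Fin n) ℂ) *ᵥ ξ) = (T : ℂ) := by
    rw [Matrix.one_mulVec]
    calc star ξ ⬝ᵥ ξ = ∑ i, starRingEnd ℂ (ξ i) * ξ i := rfl
      _ = ∑ i, (Complex.normSq (ξ i) : ℂ) := by
          refine Finset.sum_congr rfl fun i _ => ?_
          rw [mul_comm, Complex.mul_conj]
      _ = (T : ℂ) := by rw [hT]; push_cast; rfl
  have hB : star ξ ⬝ᵥ ((Fᴴ * QC + QC * F) *ᵥ ξ)
      = (((2*ν - 2*lam.re) * Complex.normSq w - a * T : ℝ) : ℂ) := by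
    rw [hG, Matrix.sub_mulVec, dotProduct_sub, Matrix.smul_mulVec,
      Matrix.smul_mulVec, dotProduct_smul, dotProduct_smul, hKval, hIval]
    simp only [smul_eq_mul]
    push_cast
    ring
  -- positivity of the quadratic form E
  set x : Fin n → ℝ := fun i => (ξ i).re with hx
  set y : Fin n → ℝ := fun i => (ξ i).im with hy
  have hEre : E.re = x ⬝ᵥ (Q *ᵥ x) + y ⬝ᵥ (Q *ᵥ y) := by
    have e1 : E = ∑ i, ∑ j, starRingEnd ℂ (ξ i) * ((Q i j : ℝ) : ℂ) * ξ j := by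
      rw [hE]
      simp only [dotProduct, Matrix.mulVec, Matrix.map_apply, Pi.star_apply, hQC]
      refine Finset.sum_congr rfl fun i _ => ?_
      rw [Finset.mul_sum]
      refine Finset.sum_congr rfl fun j _ => ?_
      simp [hc, Algebra.smul_def]
      ring
    have e2 : ∀ i, (∑ j, starRingEnd ℂ (ξ i) * ((Q i j : ℝ) : ℂ) * ξ j).re
        = ∑ j, Q i j * (x i * x j + y i * y j) := by
      intro i
      rw [Complex.re_sum]
      refine Finset.sum_congr rfl fun j _ => ?_
      simp only [Complex.mul_re, Complex.mul_im, Complex.ofReal_re, Complex.ofReal_im,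
        Complex.conj_re, Complex.conj_im, hx, hy]
      ring
    rw [e1, Complex.re_sum, Finset.sum_congr rfl (fun i _ => e2 i)]
    simp only [dotProduct, Matrix.mulVec]
    rw [← Finset.sum_add_distrib]
    refine Finset.sum_congr rfl fun i _ => ?_
    rw [Finset.mul_sum, Finset.mul_sum, ← Finset.sum_add_distrib]
    refine Finset.sum_congr rfl fun j _ => ?_
    ring
  have hEpos : 0 < E.re := by
    have hxy : x ≠ 0 ∨ y ≠ 0 := by
      by_contra h
      push_neg at h
      apply hξ0
      funext i
      have h1 := congrFun h.1 i
      have h2 := congrFun h.2 i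
      exact Complex.ext h1 h2
    have hsx : 0 ≤ x ⬝ᵥ (Q *ᵥ x) := by
      simpa using hQpos.posSemidef.dotProduct_mulVec_nonneg x
    have hsy : 0 ≤ y ⬝ᵥ (Q *ᵥ y) := by
      simpa using hQpos.posSemidef.dotProduct_mulVec_nonneg y
    rcases hxy with h | h
    · have := hQpos.dotProduct_mulVec_pos h
      rw [hEre]
      simp only [star_trivial] at this
      linarith
    · have := hQpos.dotProduct_mulVec_pos h
      rw [hEre]
      simp only [star_trivial] at this
      linarith
  -- final assembly
  have key : ((2 * μ.re : ℝ) : ℂ) * E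
      = (((2*ν - 2*lam.re) * Complex.normSq w - a * T : ℝ) : ℂ) := by
    rw [← hB, hA, add_comm, Complex.add_conj]
  have keyre : 2 * μ.re * E.re = (2*ν - 2*lam.re) * Complex.normSq w - a * T := by
    have := congrArg Complex.re key
    simpa [Complex.mul_re] using this
  have hTpos : 0 < T := by
    obtain ⟨i, hi⟩ := Function.ne_iff.mp hξ0
    exact Finset.sum_pos' (fun j _ => Complex.normSq_nonneg _)
      ⟨i, Finset.mem_univ i, Complex.normSq_pos.mpr hi⟩
  have hN : 0 ≤ Complex.normSq w := Complex.normSq_nonneg w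
  nlinarith [mul_nonneg (by linarith : (0:ℝ) ≤ 2*lam.re - 2*ν) hN]
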